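/- Let 0 ≤ k ≤ D+1. Then det Gram(e_k,…,e_D) = det Gram(e_0,…,e_D) · det Gram(b_0,…,b_{k−1}), where det Gram(v_1,…,v_m) denotes det(⟨v_i,v_j⟩)_{1≤i,j≤m} and the determinant of an empty matrix is 1. Equivalently, 𝒱(e_0,…,e_D) = 𝒱(e_k,…,e_D)/𝒱(b_0,…,b_{k−1}). -/

import Mathlib

open scoped RealInnerProductSpace

/-- For a basis `e₀,…,e_D` of a real inner product space of dimension `D+1`
with dual basis `b₀,…,b_D` (characterized by `⟪bᵢ, eⱼ⟫ = δᵢⱼ`), and `0 ≤ k ≤ D+1`,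
`det Gram(e_k,…,e_D) = det Gram(e_0,…,e_D) · det Gram(b_0,…,b_{k−1})`. -/
theorem stmt_0 (D : ℕ) (E : Type*) [NormedAddCommGroup E] [InnerProductSpace ℝ E]
    (hdim : Module.finrank ℝ E = D + 1)
    (e : Module.Basis (Fin (D + 1)) ℝ E) (b : Fin (D + 1) → E)
    (hb : ∀ i j, ⟪b i, e j⟫ = if i = j then 1 else 0)
    (k : ℕ) (hk : k ≤ D + 1) :
    Matrix.det (Matrix.of fun i j : {x : Fin (D + 1) // k ≤ (x : ℕ)} => ⟪e i.1, e j.1⟫)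
      = Matrix.det (Matrix.of fun i j : Fin (D + 1) => ⟪e i, e j⟫)
        * Matrix.det (Matrix.of fun i j : {x : Fin (D + 1) // (x : ℕ) < k} => ⟪b i.1, b j.1⟫) := by
  classical
  -- Gram matrices
  set G : Matrix (Fin (D + 1)) (Fin (D + 1)) ℝ := Matrix.of fun i j => ⟪e i, e j⟫ with hG
  set H : Matrix (Fin (D + 1)) (Fin (D + 1)) ℝ := Matrix.of fun i j => ⟪b i, b j⟫ with hH
  -- coefficient extraction
  have hrepr : ∀ (v : E) (l : Fin (D + 1)), ⟪b l, v⟫ = e.repr v l := by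
    intro v l
    conv_lhs => rw [← e.sum_repr v]
    rw [inner_sum]
    simp [inner_smul_right, hb]
  have hbexp : ∀ j, b j = ∑ l, ⟪b l, b j⟫ • e l := by
    intro j
    conv_lhs => rw [← e.sum_repr (b j)]
    refine Finset.sum_congr rfl fun l _ => ?_
    rw [hrepr]
  -- G * H = 1
  have hGH : G * H = 1 := by
    ext i j
    rw [Matrix.mul_apply]
    have : ∑ l, G i l * H l j = ⟪e i, b j⟫ := by
      conv_rhs => rw [hbexp j]
      simp [inner_sum, inner_smul_right, hG, hH, mul_comm]
    rw [this, real_inner_comm, hb]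
    simp [Matrix.one_apply, eq_comm]
  -- the splitting equivalence
  let σ : {x : Fin (D + 1) // (x : ℕ) < k} ⊕ {x : Fin (D + 1) // k ≤ (x : ℕ)} ≃ Fin (D + 1) :=
    (Equiv.sumCongr (Equiv.refl {x : Fin (D + 1) // (x : ℕ) < k})
      (Equiv.subtypeEquivRight (fun x : Fin (D + 1) =>
        (not_lt (a := (x : ℕ)) (b := k)).symm))).trans
      (Equiv.sumCompl fun x : Fin (D + 1) => (x : ℕ) < k)
  -- blocks
  set A : Matrix _ _ ℝ := Matrix.of fun i j : {x : Fin (D + 1) // (x : ℕ) < k} => G i.1 j.1 with hA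
  set B : Matrix _ _ ℝ :=
    Matrix.of fun (i : {x : Fin (D + 1) // (x : ℕ) < k}) (j : {x : Fin (D + 1) // k ≤ (x : ℕ)}) =>
      G i.1 j.1 with hB
  set C : Matrix _ _ ℝ :=
    Matrix.of fun (i : {x : Fin (D + 1) // k ≤ (x : ℕ)}) (j : {x : Fin (D + 1) // (x : ℕ) < k}) =>
      G i.1 j.1 with hC
  set Dm : Matrix _ _ ℝ := Matrix.of fun i j : {x : Fin (D + 1) // k ≤ (x : ℕ)} => G i.1 j.1 with hDm
  set A' : Matrix _ _ ℝ := Matrix.of fun i j : {x : Fin (D + 1) // (x : ℕ) < k} => H i.1 j.1 with hA'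
  set B' : Matrix _ _ ℝ :=
    Matrix.of fun (i : {x : Fin (D + 1) // (x : ℕ) < k}) (j : {x : Fin (D + 1) // k ≤ (x : ℕ)}) =>
      H i.1 j.1 with hB'
  set C' : Matrix _ _ ℝ :=
    Matrix.of fun (i : {x : Fin (D + 1) // k ≤ (x : ℕ)}) (j : {x : Fin (D + 1) // (x : ℕ) < k}) =>
      H i.1 j.1 with hC'
  set D' : Matrix _ _ ℝ := Matrix.of fun i j : {x : Fin (D + 1) // k ≤ (x : ℕ)} => H i.1 j.1 with hD'
  have hGsub : G.submatrix σ σ = Matrix.fromBlocks A B C Dm := by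
    ext i j
    cases i <;> cases j <;> rfl
  have hHsub : H.submatrix σ σ = Matrix.fromBlocks A' B' C' D' := by
    ext i j
    cases i <;> cases j <;> rfl
  have hGH' : Matrix.fromBlocks A B C Dm * Matrix.fromBlocks A' B' C' D' = 1 := by
    rw [← hGsub, ← hHsub, Matrix.submatrix_mul_equiv, hGH, Matrix.submatrix_one_equiv]
  rw [Matrix.fromBlocks_multiply, ← Matrix.fromBlocks_one] at hGH'
  have h11 : A * A' + B * C' = 1 := congrArg Matrix.toBlocks₁₁ hGH'
  have h21 : C * A' + Dm * C' = 0 := congrArg Matrix.toBlocks₂₁ hGH'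
  -- the key triangular product
  have hprod : Matrix.fromBlocks A B C Dm * Matrix.fromBlocks A' 0 C' 1
      = Matrix.fromBlocks 1 B 0 Dm := by
    rw [Matrix.fromBlocks_multiply]
    rw [h11, h21]
    simp
  have hdet := congrArg Matrix.det hprod
  rw [Matrix.det_mul, Matrix.det_fromBlocks_zero₁₂, Matrix.det_fromBlocks_zero₂₁,
    Matrix.det_one, Matrix.det_one, mul_one, one_mul] at hdet
  have hdetG : (Matrix.fromBlocks A B C Dm).det = G.det := by
    rw [← hGsub, Matrix.det_submatrix_equiv_self]
  rw [hdetG] at hdet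
  exact hdet.symm
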